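/- In the Maker-Maker scoring positional game, the optimal score is monotone in who moves first: for every finite hypergraph H and every position (sets V_L, V_R of already-claimed vertices, disjoint), Ls(H, V_L, V_R) ≥ Rs(H, V_L, V_R) (i.e. the game is nonzugzwang). -/
import Mathlib


/-- Minimax value of a scoring positional game: players alternately claim
unclaimed vertices (`turn = true` means Left/Maker to move); when all vertices
are claimed the value is given by `score VL VR`. Left maximizes, Right minimizes. -/
noncomputable def gameValue {V : Type} [Fintype V] [DecidableEq V]
    (score : Finset V → Finset V → ℤ) :
    Bool → Finset V → Finset V → ℤ := fun turn VL VR =>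
  if h : (VL ∪ VR)ᶜ = (∅ : Finset V) then score VL VR
  else
    have hne : ((VL ∪ VR)ᶜ).attach.Nonempty :=
      Finset.attach_nonempty_iff.mpr (Finset.nonempty_iff_ne_empty.mpr h)
    if turn then
      ((VL ∪ VR)ᶜ).attach.sup' hne (fun v => gameValue score false (insert v.1 VL) VR)
    else
      ((VL ∪ VR)ᶜ).attach.inf' hne (fun v => gameValue score true VL (insert v.1 VR))
termination_by turn VL VR => ((VL ∪ VR)ᶜ).card
decreasing_by
  · rw [Finset.insert_union, Finset.compl_insert]
    exact Finset.card_erase_lt_of_mem v.2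
  · rw [Finset.union_insert, Finset.compl_insert]
    exact Finset.card_erase_lt_of_mem v.2

/-- Maker-Breaker Incidence final score: number of edges of `G` both of whose
endpoints belong to Left's (Maker's) set. -/
noncomputable def mbScore {V : Type} [Fintype V] [DecidableEq V]
    (G : SimpleGraph V) (VL : Finset V) (_ : Finset V) : ℤ :=
  ({e ∈ G.edgeSet | ∀ w ∈ e, w ∈ VL} : Set (Sym2 V)).ncard

/-- Maker-Maker Incidence final score: Left's edges minus Right's edges. -/
noncomputable def mmScore {V : Type} [Fintype V] [DecidableEq V]
    (G : SimpleGraph V) (VL VR : Finset V) : ℤ :=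
  (({e ∈ G.edgeSet | ∀ w ∈ e, w ∈ VL} : Set (Sym2 V)).ncard : ℤ)
    - (({e ∈ G.edgeSet | ∀ w ∈ e, w ∈ VR} : Set (Sym2 V)).ncard : ℤ)

noncomputable def LsMB {V : Type} [Fintype V] [DecidableEq V] (G : SimpleGraph V) : ℤ :=
  gameValue (mbScore G) true ∅ ∅

noncomputable def RsMB {V : Type} [Fintype V] [DecidableEq V] (G : SimpleGraph V) : ℤ :=
  gameValue (mbScore G) false ∅ ∅

noncomputable def LsMM {V : Type} [Fintype V] [DecidableEq V] (G : SimpleGraph V) : ℤ :=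
  gameValue (mmScore G) true ∅ ∅

noncomputable def RsMM {V : Type} [Fintype V] [DecidableEq V] (G : SimpleGraph V) : ℤ :=
  gameValue (mmScore G) false ∅ ∅

/-- Maker-Breaker final score on a hypergraph with edge set `E`. -/
def mbScoreH {V : Type} [Fintype V] [DecidableEq V]
    (E : Finset (Finset V)) (VL : Finset V) (_ : Finset V) : ℤ :=
  ((E.filter (fun e => e ⊆ VL)).card : ℤ)

/-- Maker-Maker final score on a hypergraph with edge set `E`. -/
def mmScoreH {V : Type} [Fintype V] [DecidableEq V]
    (E : Finset (Finset V)) (VL VR : Finset V) : ℤ :=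
  ((E.filter (fun e => e ⊆ VL)).card : ℤ) - ((E.filter (fun e => e ⊆ VR)).card : ℤ)

/-- The Maker-Maker scoring positional game is nonzugzwang:
in every position, the value with Left to move is at least the value with Right to move. -/
lemma gameValue_terminal {V : Type} [Fintype V] [DecidableEq V]
    (score : Finset V → Finset V → ℤ) (t : Bool) (VL VR : Finset V)
    (h : (VL ∪ VR)ᶜ = (∅ : Finset V)) : gameValue score t VL VR = score VL VR := by
  rw [gameValue]; simp [h]

lemma gameValue_true {V : Type} [Fintype V] [DecidableEq V]
    (score : Finset V → Finset V → ℤ) (VL VR : Finset V)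
    (h : (VL ∪ VR)ᶜ ≠ (∅ : Finset V))
    (hne : ((VL ∪ VR)ᶜ).attach.Nonempty) :
    gameValue score true VL VR
      = ((VL ∪ VR)ᶜ).attach.sup' hne (fun v => gameValue score false (insert v.1 VL) VR) := by
  rw [gameValue, dif_neg h]; rfl

lemma gameValue_false {V : Type} [Fintype V] [DecidableEq V]
    (score : Finset V → Finset V → ℤ) (VL VR : Finset V)
    (h : (VL ∪ VR)ᶜ ≠ (∅ : Finset V))
    (hne : ((VL ∪ VR)ᶜ).attach.Nonempty) :
    gameValue score false VL VR
      = ((VL ∪ VR)ᶜ).attach.inf' hne (fun v => gameValue score true VL (insert v.1 VR)) := by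
  rw [gameValue, dif_neg h]; rfl

lemma gameValue_key {V : Type} [Fintype V] [DecidableEq V]
    (score : Finset V → Finset V → ℤ)
    (hL : ∀ VL VR v, score VL VR ≤ score (insert v VL) VR)
    (hR : ∀ VL VR v, score VL (insert v VR) ≤ score VL VR) :
    ∀ n (VL VR : Finset V), ((VL ∪ VR)ᶜ).card = n →
      ((∀ v ∈ (VL ∪ VR)ᶜ, ∀ t, gameValue score t VL (insert v VR) ≤ gameValue score t VL VR) ∧
        gameValue score false VL VR ≤ gameValue score true VL VR) := by
  intro n
  induction n using Nat.strong_induction_on with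
  | _ n IH =>
    intro VL VR hcard
    have hcompl : ∀ v : V, (VL ∪ insert v VR)ᶜ = ((VL ∪ VR)ᶜ).erase v := by
      intro v; rw [Finset.union_insert, Finset.compl_insert]
    have hB : ∀ v ∈ (VL ∪ VR)ᶜ, ∀ t,
        gameValue score t VL (insert v VR) ≤ gameValue score t VL VR := by
      intro v hv t
      have hSne : (VL ∪ VR)ᶜ ≠ ∅ := Finset.ne_empty_of_mem hv
      have hSnon : ((VL ∪ VR)ᶜ).attach.Nonempty :=
        Finset.attach_nonempty_iff.mpr (Finset.nonempty_iff_ne_empty.mpr hSne)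
      have hcard' : (((VL ∪ VR)ᶜ).erase v).card = n - 1 := by
        rw [Finset.card_erase_of_mem hv, hcard]
      have hn1 : n - 1 < n := by
        have : 0 < n := by
          rw [← hcard]; exact Finset.card_pos.mpr ⟨v, hv⟩
        omega
      by_cases hterm : (VL ∪ insert v VR)ᶜ = (∅ : Finset V)
      · -- only v was free
        have hS : (VL ∪ VR)ᶜ = {v} := by
          have he : ((VL ∪ VR)ᶜ).erase v = ∅ := by rw [← hcompl v]; exact hterm
          rcases (Finset.erase_eq_empty_iff _ _).mp he with h' | h'
          · exact absurd h' hSne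
          · exact h'
        rw [gameValue_terminal score t VL (insert v VR) hterm]
        cases t with
        | false =>
          rw [gameValue_false score VL VR hSne hSnon]
          apply Finset.le_inf'
          intro w _
          have hwv : w.1 = v := by
            by_contra hne'
            have hmem : w.1 ∈ ((VL ∪ VR)ᶜ).erase v := Finset.mem_erase.mpr ⟨hne', w.2⟩
            have he : ((VL ∪ VR)ᶜ).erase v = ∅ := by rw [← hcompl v]; exact hterm
            rw [he] at hmem
            exact absurd hmem (Finset.notMem_empty _)
          rw [hwv, gameValue_terminal score true VL (insert v VR) hterm]
        | true =>
          rw [gameValue_true score VL VR hSne hSnon]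
          have hvmem : (⟨v, hv⟩ : {x // x ∈ (VL ∪ VR)ᶜ}) ∈ ((VL ∪ VR)ᶜ).attach :=
            Finset.mem_attach _ _
          refine le_trans ?_ (Finset.le_sup' _ hvmem)
          simp only
          have hterm2 : (insert v VL ∪ VR)ᶜ = (∅ : Finset V) := by
            rw [Finset.insert_union, Finset.compl_insert, ← hcompl v]; exact hterm
          rw [gameValue_terminal score false (insert v VL) VR hterm2]
          exact le_trans (hR VL VR v) (hL VL VR v)
      · -- still vertices free after v claimed
        have htermnon : ((VL ∪ insert v VR)ᶜ).attach.Nonempty :=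
          Finset.attach_nonempty_iff.mpr (Finset.nonempty_iff_ne_empty.mpr hterm)
        cases t with
        | true =>
          rw [gameValue_true score VL (insert v VR) hterm htermnon,
            gameValue_true score VL VR hSne hSnon]
          apply Finset.sup'_le
          intro w hw
          have hw1 : w.1 ∈ ((VL ∪ VR)ᶜ).erase v := by rw [← hcompl v]; exact w.2
          have hwS : w.1 ∈ (VL ∪ VR)ᶜ := Finset.mem_of_mem_erase hw1
          -- position (insert w.1 VL, VR) has compl = erase w.1, card n-1, v free in it
          have hc2 : ((insert w.1 VL ∪ VR)ᶜ).card = n - 1 := by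
            rw [Finset.insert_union, Finset.compl_insert,
              Finset.card_erase_of_mem hwS, hcard]
          have hvfree : v ∈ (insert w.1 VL ∪ VR)ᶜ := by
            rw [Finset.insert_union, Finset.compl_insert]
            exact Finset.mem_erase.mpr ⟨fun h => (Finset.mem_erase.mp hw1).1 h.symm, hv⟩
          have := (IH (n-1) hn1 (insert w.1 VL) VR hc2).1 v hvfree false
          refine le_trans this ?_
          exact Finset.le_sup' (f := fun u : {x // x ∈ (VL ∪ VR)ᶜ} =>
            gameValue score false (insert u.1 VL) VR) (Finset.mem_attach _ ⟨w.1, hwS⟩)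
        | false =>
          rw [gameValue_false score VL (insert v VR) hterm htermnon,
            gameValue_false score VL VR hSne hSnon]
          apply Finset.le_inf'
          intro w hw
          by_cases hwv : w.1 = v
          · -- need nonzugzwang at (VL, insert v VR), card n-1
            have hc2 : ((VL ∪ insert v VR)ᶜ).card = n - 1 := by
              rw [hcompl v]; exact hcard'
            have hC := (IH (n-1) hn1 VL (insert v VR) hc2).2
            rw [gameValue_false score VL (insert v VR) hterm htermnon] at hC
            rw [hwv]
            exact hC
          · -- use IH(B) at position (VL, insert w VR) with vertex v
            have hw1 : w.1 ∈ (VL ∪ VR)ᶜ := w.2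
            have hc2 : ((VL ∪ insert w.1 VR)ᶜ).card = n - 1 := by
              rw [hcompl w.1, Finset.card_erase_of_mem hw1, hcard]
            have hvfree : v ∈ (VL ∪ insert w.1 VR)ᶜ := by
              rw [hcompl w.1]
              exact Finset.mem_erase.mpr ⟨fun h => hwv h.symm, hv⟩
            have hBih := (IH (n-1) hn1 VL (insert w.1 VR) hc2).1 v hvfree true
            rw [Finset.insert_comm] at hBih
            refine le_trans ?_ hBih
            have hwS' : w.1 ∈ (VL ∪ insert v VR)ᶜ := by
              rw [hcompl v]
              exact Finset.mem_erase.mpr ⟨hwv, hw1⟩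
            exact Finset.inf'_le (f := fun u : {x // x ∈ (VL ∪ insert v VR)ᶜ} =>
              gameValue score true VL (insert u.1 (insert v VR)))
              (Finset.mem_attach _ ⟨w.1, hwS'⟩)
    refine ⟨hB, ?_⟩
    by_cases h : (VL ∪ VR)ᶜ = (∅ : Finset V)
    · rw [gameValue_terminal score false VL VR h, gameValue_terminal score true VL VR h]
    · have hSnon : ((VL ∪ VR)ᶜ).attach.Nonempty :=
        Finset.attach_nonempty_iff.mpr (Finset.nonempty_iff_ne_empty.mpr h)
      obtain ⟨v, hv⟩ := Finset.nonempty_iff_ne_empty.mpr h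
      rw [gameValue_false score VL VR h hSnon]
      refine le_trans (Finset.inf'_le (f := fun u : {x // x ∈ (VL ∪ VR)ᶜ} =>
        gameValue score true VL (insert u.1 VR)) (Finset.mem_attach _ ⟨v, hv⟩)) ?_
      exact hB v hv true

theorem makerMaker_scoring_game_nonzugzwang {V : Type} [Fintype V] [DecidableEq V]
    (E : Finset (Finset V)) (VL VR : Finset V) (hdisj : Disjoint VL VR) :
    gameValue (mmScoreH E) false VL VR ≤ gameValue (mmScoreH E) true VL VR := by
  have hL : ∀ (A B : Finset V) v, mmScoreH E A B ≤ mmScoreH E (insert v A) B := by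
    intro A B v
    unfold mmScoreH
    have : (E.filter (fun e => e ⊆ A)).card ≤ (E.filter (fun e => e ⊆ insert v A)).card :=
      Finset.card_le_card (by
        intro e he
        simp only [Finset.mem_filter] at he ⊢
        exact ⟨he.1, he.2.trans (Finset.subset_insert v A)⟩)
    omega
  have hR : ∀ (A B : Finset V) v, mmScoreH E A (insert v B) ≤ mmScoreH E A B := by
    intro A B v
    unfold mmScoreH
    have : (E.filter (fun e => e ⊆ B)).card ≤ (E.filter (fun e => e ⊆ insert v B)).card :=
      Finset.card_le_card (by
        intro e he
        simp only [Finset.mem_filter] at he ⊢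
        exact ⟨he.1, he.2.trans (Finset.subset_insert v B)⟩)
    omega
  exact (gameValue_key (mmScoreH E) hL hR ((VL ∪ VR)ᶜ).card VL VR rfl).2
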